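/- The loop invariant of online softmax holds: at every step k, z^(k) = Σ_{j=1}^{k} exp(s_j - μ^(k)) and A^(k) = Σ_{j=1}^{k} exp(s_j - μ^(k))·v_j, where μ^(k) = max_{1≤j≤k} s_j. -/
import Mathlib


open Finset

/-- Loop invariant of online softmax: at every step `k` (for `1 ≤ k ≤ K`),
`μ^(k) = max_{1 ≤ j ≤ k} s_j`, `z^(k) = Σ_{j=1}^k exp(s_j - μ^(k))`, and
`A^(k) = Σ_{j=1}^k exp(s_j - μ^(k)) • v_j`. -/
theorem online_softmax_loop_invariant
    (K C : ℕ) (hK : 1 ≤ K) (s μ z : ℕ → ℝ) (v A : ℕ → (Fin C → ℝ))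
    (hμ1 : μ 1 = s 1) (hz1 : z 1 = 1) (hA1 : A 1 = v 1)
    (hμ : ∀ k, 1 ≤ k → μ (k + 1) = max (μ k) (s (k + 1)))
    (hz : ∀ k, 1 ≤ k →
      z (k + 1) = z k * Real.exp (μ k - μ (k + 1)) + Real.exp (s (k + 1) - μ (k + 1)))
    (hA : ∀ k, 1 ≤ k →
      A (k + 1) = Real.exp (μ k - μ (k + 1)) • A k
        + Real.exp (s (k + 1) - μ (k + 1)) • v (k + 1)) :
    ∀ k, 1 ≤ k → k ≤ K →
      (∃ hne : (Finset.Icc 1 k).Nonempty, μ k = (Finset.Icc 1 k).sup' hne s) ∧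
      z k = ∑ j ∈ Finset.Icc 1 k, Real.exp (s j - μ k) ∧
      A k = ∑ j ∈ Finset.Icc 1 k, Real.exp (s j - μ k) • v j := by
  intro k hk hkK
  clear hkK
  induction k, hk using Nat.le_induction with
  | base =>
    refine ⟨⟨⟨1, by simp⟩, ?_⟩, ?_, ?_⟩ <;> simp [hμ1, hz1, hA1]
  | succ k hk ih =>
    obtain ⟨⟨hne, hμk⟩, hzk, hAk⟩ := ih
    have hins : Finset.Icc 1 (k + 1) = insert (k + 1) (Finset.Icc 1 k) := by
      ext x; simp only [Finset.mem_Icc, Finset.mem_insert]; omega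
    have hne' : (Finset.Icc 1 (k + 1)).Nonempty := ⟨1, by simp⟩
    have hμ' : μ (k + 1) = (Finset.Icc 1 (k + 1)).sup' hne' s := by
      rw [hμ k hk, hμk]
      rw [Finset.sup'_congr hne' hins (fun _ _ => rfl), Finset.sup'_insert hne]
      exact max_comm _ _
    refine ⟨⟨hne', hμ'⟩, ?_, ?_⟩
    · rw [hz k hk, hzk, hins, Finset.sum_insert (by simp), Finset.sum_mul, add_comm]
      congr 1
      exact Finset.sum_congr rfl fun j _ => by
        rw [← Real.exp_add, sub_add_sub_cancel]
    · rw [hA k hk, hAk, hins, Finset.sum_insert (by simp), Finset.smul_sum]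
      rw [add_comm]
      congr 1
      exact Finset.sum_congr rfl fun j _ => by
        rw [smul_smul, ← Real.exp_add, add_comm, sub_add_sub_cancel]
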